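/- Let C be a category with finite colimits and N ⊆ C a subcategory closed under cobase change that contains all isomorphisms. Let F : X → Y be a natural transformation of diagrams indexed by a cofinite poset I which is a cospecial N-map. Then F is a levelwise N-map, i.e., each component X_t → Y_t lies in N. -/

import Mathlib

open CategoryTheory Limits

universe w v u

namespace Paper

variable {C : Type u} [Category.{v} C]

/-- A poset is *cofinite* if every principal downset is finite. -/
def CofinitePoset (I : Type w) [PartialOrder I] : Prop :=
  ∀ t : I, {s : I | s ≤ t}.Finite

variable {I : Type w} [PartialOrder I]

/-- The inclusion of the (strictly) below-`t` part of a poset. -/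
def belowIncl (t : I) : {s : I // s < t} ⥤ I :=
  Monotone.functor (f := fun s => s.1) (fun _ _ h => h)

/-- A natural transformation `F : X ⟶ Y` of diagrams indexed by a cofinite poset `I` is a
*cospecial `N`-map* if for every `t : I` the natural map
`X_t ⊔_{colim_{s<t} X_s} colim_{s<t} Y_s ⟶ Y_t` lies in `N`.  We express this using
(existing) colimit cocones `cX`, `cY` of the restrictions of `X` and `Y` to `{s | s < t}`,
the canonical comparison maps `a : cX.pt ⟶ X_t`, `b : cX.pt ⟶ cY.pt`, `e : cY.pt ⟶ Y_t`
(characterized by their compatibilities with the cocone legs), a pushout of `a` along `b`,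
and the induced map `k` to `Y_t`. -/
def IsCospecial (N : MorphismProperty C) {X Y : I ⥤ C} (F : X ⟶ Y) : Prop :=
  ∀ t : I,
    ∃ (cX : Cocone (belowIncl t ⋙ X)) (cY : Cocone (belowIncl t ⋙ Y)),
      Nonempty (IsColimit cX) ∧ Nonempty (IsColimit cY) ∧
      ∃ (a : cX.pt ⟶ X.obj t) (b : cX.pt ⟶ cY.pt) (e : cY.pt ⟶ Y.obj t),
        (∀ s : {s : I // s < t},
          cX.ι.app s ≫ a = X.map (homOfLE s.2.le) ∧
          cX.ι.app s ≫ b = F.app s.1 ≫ cY.ι.app s ∧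
          cY.ι.app s ≫ e = Y.map (homOfLE s.2.le)) ∧
        ∃ (P : C) (inl : X.obj t ⟶ P) (inr : cY.pt ⟶ P) (k : P ⟶ Y.obj t),
          IsPushout a b inl inr ∧ inl ≫ k = F.app t ∧ inr ≫ k = e ∧ N k

end Paper

open Paper

namespace Stmt9

open Paper

variable {C : Type u} [Category.{v} C] {I : Type w} [PartialOrder I]

def incl (p : I → Prop) : {s : I // p s} ⥤ I :=
  Monotone.functor (f := fun s => s.1) (fun _ _ h => h)

example (t : I) : incl (fun s => s < t) = belowIncl t := rfl

variable [HasFiniteColimits C]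

lemma build (Z : I ⥤ C) (p : I → Prop) (m : I) (hpm : p m)
    (hmax : ∀ b, p b → ¬ m < b)
    (hps : ∀ s : I, s < m → p s ∧ s ≠ m)
    (c' : Cocone (incl (fun s => p s ∧ s ≠ m) ⋙ Z)) (h' : IsColimit c')
    (cm : Cocone (belowIncl m ⋙ Z)) (hcm : IsColimit cm)
    (am : cm.pt ⟶ Z.obj m)
    (ham : ∀ s : {s : I // s < m}, cm.ι.app s ≫ am = Z.map (homOfLE s.2.le))
    (ℓ : cm.pt ⟶ c'.pt)
    (hℓ : ∀ s : {s : I // s < m}, cm.ι.app s ≫ ℓ = c'.ι.app ⟨s.1, hps s.1 s.2⟩) :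
    ∃ (cQ : Cocone (incl p ⋙ Z)) (_ : IsColimit cQ) (inlQ : Z.obj m ⟶ cQ.pt)
      (inrQ : c'.pt ⟶ cQ.pt),
      IsPushout am ℓ inlQ inrQ ∧ cQ.ι.app ⟨m, hpm⟩ = inlQ ∧
      ∀ (s : I) (hs : p s ∧ s ≠ m), cQ.ι.app ⟨s, hs.1⟩ = c'.ι.app ⟨s, hs⟩ ≫ inrQ := by
  classical
  have K1 : ∀ (s : I) (hs : s < m) (hmem : p s ∧ s ≠ m),
      c'.ι.app ⟨s, hmem⟩ ≫ pushout.inr am ℓ = Z.map (homOfLE hs.le) ≫ pushout.inl am ℓ := by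
    intro s hs hmem
    have h1 := hℓ ⟨s, hs⟩
    have h2 := ham ⟨s, hs⟩
    have e1 : c'.ι.app ⟨s, hmem⟩ ≫ pushout.inr am ℓ
        = (cm.ι.app ⟨s, hs⟩ ≫ ℓ) ≫ pushout.inr am ℓ := by rw [h1] <;> rfl
    have e2 : (cm.ι.app ⟨s, hs⟩ ≫ ℓ) ≫ pushout.inr am ℓ = cm.ι.app ⟨s, hs⟩ ≫ am ≫ pushout.inl am ℓ := by
          rw [Category.assoc, ← pushout.condition] <;> rfl
    have e3 : cm.ι.app ⟨s, hs⟩ ≫ am ≫ pushout.inl am ℓ = Z.map (homOfLE hs.le) ≫ pushout.inl am ℓ := by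
          rw [← Category.assoc, h2]; rfl
    exact e1.trans (e2.trans e3)
  have w' : ∀ (s s' : I) (hs : p s ∧ s ≠ m) (hs' : p s' ∧ s' ≠ m) (hle : s ≤ s'),
      Z.map (homOfLE hle) ≫ c'.ι.app ⟨s', hs'⟩ = c'.ι.app ⟨s, hs⟩ := fun s s' hs hs' hle =>
    c'.w (homOfLE (show (⟨s, hs⟩ : {x : I // p x ∧ x ≠ m}) ≤ ⟨s', hs'⟩ from hle))
  let app : ∀ s : {s : I // p s}, Z.obj s.1 ⟶ pushout am ℓ := fun s =>
    if h : s.1 = m then Z.map (homOfLE (le_of_eq h)) ≫ pushout.inl am ℓ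
    else c'.ι.app ⟨s.1, s.2, h⟩ ≫ pushout.inr am ℓ
  have happ_eq : ∀ (s : {s : I // p s}) (h : s.1 ≤ m),
      app s = Z.map (homOfLE h) ≫ pushout.inl am ℓ := by
    intro s h
    by_cases hsm : s.1 = m
    · exact dif_pos hsm
    · have hlt : s.1 < m := lt_of_le_of_ne h hsm
      rw [show app s = c'.ι.app ⟨s.1, s.2, hsm⟩ ≫ pushout.inr am ℓ from dif_neg hsm,
        K1 s.1 hlt ⟨s.2, hsm⟩]
  have happ_ne : ∀ (s : {s : I // p s}) (h : s.1 ≠ m),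
      app s = c'.ι.app ⟨s.1, s.2, h⟩ ≫ pushout.inr am ℓ := fun s h => dif_neg h
  let cQ : Cocone (incl p ⋙ Z) :=
    { pt := pushout am ℓ
      ι :=
        { app := app
          naturality := by
            intro s s' f
            have hle : s.1 ≤ s'.1 := leOfHom f
            refine Eq.trans ?_ (Category.comp_id _).symm
            show Z.map (homOfLE hle) ≫ app s' = app s
            by_cases h' : s'.1 = m
            · rw [happ_eq s' (le_of_eq h'), happ_eq s (hle.trans (le_of_eq h')),
                ← Category.assoc, ← Z.map_comp]
              rfl
            · have h : s.1 ≠ m := by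
                intro hsm
                rcases eq_or_lt_of_le (show m ≤ s'.1 from hsm ▸ hle) with h1 | h1
                · exact h' h1.symm
                · exact hmax s'.1 s'.2 h1
              erw [happ_ne s' h', happ_ne s h, ← Category.assoc, w' s.1 s'.1 ⟨s.2, h⟩ ⟨s'.2, h'⟩ hle]; rfl } }
  have hι_eq : ∀ (s : {s : I // p s}) (h : s.1 ≤ m),
      cQ.ι.app s = Z.map (homOfLE h) ≫ pushout.inl am ℓ := happ_eq
  have hι_ne : ∀ (s : {s : I // p s}) (h : s.1 ≠ m),
      cQ.ι.app s = c'.ι.app ⟨s.1, s.2, h⟩ ≫ pushout.inr am ℓ := happ_ne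
  have hιm : cQ.ι.app ⟨m, hpm⟩ = pushout.inl am ℓ := by
    rw [hι_eq ⟨m, hpm⟩ le_rfl, show (homOfLE (le_refl m)) = 𝟙 m from rfl, Z.map_id,
      Category.id_comp]
  -- the colimit structure
  let vmap : ∀ c : Cocone (incl p ⋙ Z), c'.pt ⟶ c.pt := fun c =>
    h'.desc ⟨c.pt,
      { app := fun s => c.ι.app ⟨s.1, s.2.1⟩
        naturality := fun s s' f =>
          Eq.trans (c.w (homOfLE (show (⟨s.1, s.2.1⟩ : {x : I // p x}) ≤ ⟨s'.1, s'.2.1⟩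
            from leOfHom f))) (Category.comp_id _).symm }⟩
  have hvmap : ∀ (c : Cocone (incl p ⋙ Z)) (s : {x : I // p x ∧ x ≠ m}),
      c'.ι.app s ≫ vmap c = c.ι.app ⟨s.1, s.2.1⟩ := fun c s => h'.fac _ s
  have hcomm : ∀ c : Cocone (incl p ⋙ Z),
      am ≫ c.ι.app ⟨m, hpm⟩ = ℓ ≫ vmap c := by
    intro c
    apply hcm.hom_ext
    intro s
    erw [← Category.assoc, ← Category.assoc, ham s, hℓ s, hvmap]
    exact c.w (homOfLE (show (⟨s.1, (hps s.1 s.2).1⟩ : {x : I // p x}) ≤ ⟨m, hpm⟩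
      from s.2.le))
  let descfun : ∀ c : Cocone (incl p ⋙ Z), pushout am ℓ ⟶ c.pt := fun c =>
    pushout.desc (c.ι.app ⟨m, hpm⟩) (vmap c) (hcomm c)
  have hcol : IsColimit cQ := by
    refine { desc := descfun, fac := ?_, uniq := ?_ }
    · intro c s
      by_cases h : s.1 = m
      · rw [show cQ.ι.app s ≫ descfun c
            = (Z.map (homOfLE (le_of_eq h)) ≫ pushout.inl am ℓ) ≫ descfun c by
            rw [hι_eq s (le_of_eq h)]; rfl]
        erw [Category.assoc, pushout.inl_desc]
        exact c.w (homOfLE (show s ≤ ⟨m, hpm⟩ from (le_of_eq h : (s : I) ≤ m)))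
      · rw [show cQ.ι.app s ≫ descfun c
            = (c'.ι.app ⟨s.1, s.2, h⟩ ≫ pushout.inr am ℓ) ≫ descfun c by
            rw [hι_ne s h]; rfl]
        erw [Category.assoc, pushout.inr_desc, hvmap]
    · intro c f hw
      apply pushout.hom_ext
      · rw [show pushout.inl am ℓ ≫ descfun c = c.ι.app ⟨m, hpm⟩ from pushout.inl_desc _ _ _,
          ← hιm]
        exact hw ⟨m, hpm⟩
      · rw [show pushout.inr am ℓ ≫ descfun c = vmap c from pushout.inr_desc _ _ _]
        apply h'.hom_ext
        intro s
        rw [hvmap, ← Category.assoc]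
        have : c'.ι.app s ≫ pushout.inr am ℓ = cQ.ι.app ⟨s.1, s.2.1⟩ :=
          (hι_ne ⟨s.1, s.2.1⟩ s.2.2).symm
        rw [this]
        exact hw ⟨s.1, s.2.1⟩
  exact ⟨cQ, hcol, pushout.inl am ℓ, pushout.inr am ℓ, IsPushout.of_hasPushout am ℓ, hιm,
    fun s hs => hι_ne ⟨s, hs.1⟩ hs.2⟩

lemma good_empty {C : Type u} [Category.{v} C] [HasFiniteColimits C]
    (N : MorphismProperty C)
    (hN_iso : ∀ {X Y : C} (e : X ≅ Y), N e.hom)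
    {I : Type w} [PartialOrder I]
    {X Y : I ⥤ C} (F : X ⟶ Y) (p : I → Prop) (hemp : ∀ s, ¬ p s) :
    ∃ (cX : Cocone (incl p ⋙ X)) (cY : Cocone (incl p ⋙ Y))
      (hX : IsColimit cX) (hY : IsColimit cY),
      N (hX.map cY (Functor.whiskerLeft (incl p) F)) := by
  have hE : IsEmpty {s : I // p s} := ⟨fun s => hemp s.1 s.2⟩
  let mk : ∀ Z : I ⥤ C, Cocone (incl p ⋙ Z) := fun Z =>
    { pt := ⊥_ C
      ι := { app := fun s => (hE.false s).elim, naturality := fun s => (hE.false s).elim } }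
  let hmk : ∀ Z : I ⥤ C, IsColimit (mk Z) := fun Z =>
    { desc := fun c => initial.to c.pt
      fac := fun c s => (hE.false s).elim
      uniq := fun c f hw => Subsingleton.elim _ _ }
  refine ⟨mk X, mk Y, hmk X, hmk Y, ?_⟩
  have : (hmk X).map (mk Y) (Functor.whiskerLeft (incl p) F) = (Iso.refl (⊥_ C)).hom :=
    Subsingleton.elim _ _
  rw [this]
  exact hN_iso (Iso.refl _)

lemma good {C : Type u} [Category.{v} C] [HasFiniteColimits C]
    (N : MorphismProperty C)
    (hN_iso : ∀ {X Y : C} (e : X ≅ Y), N e.hom)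
    (hN_comp : ∀ {X Y Z : C} (f : X ⟶ Y) (g : Y ⟶ Z), N f → N g → N (f ≫ g))
    (hN_pushout : ∀ {A B X Y : C} (n : A ⟶ B) (u : A ⟶ X) (w : B ⟶ Y) (g : X ⟶ Y),
      IsPushout n u w g → N n → N g)
    {I : Type w} [PartialOrder I]
    {X Y : I ⥤ C} (F : X ⟶ Y) (hF : IsCospecial N F) :
    ∀ (n : ℕ) (p : I → Prop) (hfin : (setOf p).Finite),
      hfin.toFinset.card ≤ n → (∀ ⦃a b : I⦄, a ≤ b → p b → p a) →
      ∃ (cX : Cocone (incl p ⋙ X)) (cY : Cocone (incl p ⋙ Y))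
        (hX : IsColimit cX) (hY : IsColimit cY),
        N (hX.map cY (Functor.whiskerLeft (incl p) F)) := by
  intro n
  induction n with
  | zero =>
    intro p hfin hcard hlow
    refine good_empty N hN_iso F p (fun s hs => ?_)
    have h1 : s ∈ hfin.toFinset := hfin.mem_toFinset.mpr hs
    have := Finset.card_pos.mpr ⟨s, h1⟩
    omega
  | succ n ih =>
    intro p hfin hcard hlow
    classical
    by_cases hne : ∃ s, p s
    · -- pick a maximal element m
      obtain ⟨m, hpm, hmax0⟩ := Set.Finite.exists_maximalFor id (setOf p) hfin hne
      have hmax : ∀ b, p b → ¬ m < b := fun b hb hlt => lt_irrefl _ (lt_of_lt_of_le hlt (hmax0 hb hlt.le))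
      set p' : I → Prop := fun s => p s ∧ s ≠ m with hp'
      have hfin' : (setOf p').Finite := hfin.subset (fun s hs => hs.1)
      have hcard' : hfin'.toFinset.card ≤ n := by
        have hsub : hfin'.toFinset = hfin.toFinset.erase m := by
          ext s
          simp only [Set.Finite.mem_toFinset, Finset.mem_erase, Set.mem_setOf_eq, hp']
          exact and_comm
        have hm : m ∈ hfin.toFinset := hfin.mem_toFinset.mpr hpm
        rw [hsub, Finset.card_erase_of_mem hm]
        omega
      have hlow' : ∀ ⦃a b : I⦄, a ≤ b → p' b → p' a := by
        intro a b hab hb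
        refine ⟨hlow hab hb.1, fun ha => ?_⟩
        exact hmax b hb.1 (lt_of_le_of_ne (ha ▸ hab) (Ne.symm hb.2))
      obtain ⟨cX', cY', hX', hY', hb'⟩ := ih p' hfin' hcard' hlow'
      obtain ⟨cXm, cYm, ⟨hXm⟩, ⟨hYm⟩, a, b, e, hcomp, P, inlP, inrP, k, hpushP, hk1, hk2, hkN⟩ :=
        hF m
      have hps : ∀ s : I, s < m → p' s := fun s hs => ⟨hlow hs.le hpm, ne_of_lt hs⟩
      -- the comparison maps from the below-m colimits to the p' colimits
      let dX : Cocone (belowIncl m ⋙ X) :=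
        { pt := cX'.pt
          ι := { app := fun s => cX'.ι.app ⟨s.1, hps s.1 s.2⟩
                 naturality := fun s s' f =>
                   Eq.trans (cX'.w (homOfLE (show (⟨s.1, hps s.1 s.2⟩ : {x : I // p' x}) ≤
                     ⟨s'.1, hps s'.1 s'.2⟩ from leOfHom f))) (Category.comp_id _).symm } }
      let dY : Cocone (belowIncl m ⋙ Y) :=
        { pt := cY'.pt
          ι := { app := fun s => cY'.ι.app ⟨s.1, hps s.1 s.2⟩
                 naturality := fun s s' f =>
                   Eq.trans (cY'.w (homOfLE (show (⟨s.1, hps s.1 s.2⟩ : {x : I // p' x}) ≤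
                     ⟨s'.1, hps s'.1 s'.2⟩ from leOfHom f))) (Category.comp_id _).symm } }
      let ℓX : cXm.pt ⟶ cX'.pt := hXm.desc dX
      let ℓY : cYm.pt ⟶ cY'.pt := hYm.desc dY
      have hℓX : ∀ s : {s : I // s < m}, cXm.ι.app s ≫ ℓX = cX'.ι.app ⟨s.1, hps s.1 s.2⟩ :=
        fun s => hXm.fac dX s
      have hℓY : ∀ s : {s : I // s < m}, cYm.ι.app s ≫ ℓY = cY'.ι.app ⟨s.1, hps s.1 s.2⟩ :=
        fun s => hYm.fac dY s
      obtain ⟨cXS, hXS, inlQX, inrQX, SX, hXm_leg, hX_leg⟩ :=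
        build X p m hpm hmax hps cX' hX' cXm hXm a (fun s => (hcomp s).1) ℓX hℓX
      obtain ⟨cYS, hYS, inlQY, inrQY, SY, hYm_leg, hY_leg⟩ :=
        build Y p m hpm hmax hps cY' hY' cYm hYm e (fun s => (hcomp s).2.2) ℓY hℓY
      refine ⟨cXS, cYS, hXS, hYS, ?_⟩
      set b' : cX'.pt ⟶ cY'.pt := hX'.map cY' (Functor.whiskerLeft (incl p') F) with hb'def
      set bS : cXS.pt ⟶ cYS.pt := hXS.map cYS (Functor.whiskerLeft (incl p) F) with hbSdef
      have hcompat : ℓX ≫ b' = b ≫ ℓY := by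
        apply hXm.hom_ext
        intro s
        erw [← Category.assoc, hℓX s, ← Category.assoc, (hcomp s).2.1, Category.assoc, hℓY s]
        exact hX'.ι_map cY' (Functor.whiskerLeft (incl p') F) ⟨s.1, hps s.1 s.2⟩
      -- the pushout Q2 of b' along inrQX
      let q2 : cY'.pt ⟶ pushout b' inrQX := pushout.inl b' inrQX
      let q1 : cXS.pt ⟶ pushout b' inrQX := pushout.inr b' inrQX
      have S4 : IsPushout b' inrQX q2 q1 := IsPushout.of_hasPushout b' inrQX
      have S5 : IsPushout a (ℓX ≫ b') (inlQX ≫ q1) q2 := SX.paste_vert S4.flip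
      rw [hcompat] at S5
      have hcommr : a ≫ inlQX ≫ q1 = b ≫ ℓY ≫ q2 := by
        have := S5.w
        rwa [Category.assoc] at this
      let r : P ⟶ pushout b' inrQX := hpushP.desc (inlQX ≫ q1) (ℓY ≫ q2) hcommr
      have hr1 : inlP ≫ r = inlQX ≫ q1 := hpushP.inl_desc _ _ _
      have hr2 : inrP ≫ r = ℓY ≫ q2 := hpushP.inr_desc _ _ _
      have S6 : IsPushout inrP ℓY r q2 :=
        IsPushout.of_top (show IsPushout a (b ≫ ℓY) (inlP ≫ r) q2 by rw [hr1]; exact S5)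
          hr2 hpushP
      have hcommh : inrP ≫ k ≫ inlQY = ℓY ≫ inrQY := by
        rw [← Category.assoc, hk2]
        exact SY.w
      let h : pushout b' inrQX ⟶ cYS.pt := S6.desc (k ≫ inlQY) inrQY hcommh
      have hh1 : r ≫ h = k ≫ inlQY := S6.inl_desc _ _ _
      have hh2 : q2 ≫ h = inrQY := S6.inr_desc _ _ _
      have S7 : IsPushout k r inlQY h := by
        refine IsPushout.of_left ?_ hh1.symm S6
        rw [hk2, hh2]
        exact SY
      have hfinal : bS = q1 ≫ h := by
        apply SX.hom_ext
        · -- inl components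
          have L1 : inlQX ≫ bS = F.app m ≫ inlQY := by
            have e1 : inlQX ≫ bS = cXS.ι.app ⟨m, hpm⟩ ≫ bS := by rw [hXm_leg] <;> rfl
            have e2 : cXS.ι.app ⟨m, hpm⟩ ≫ bS = F.app m ≫ cYS.ι.app ⟨m, hpm⟩ := by
                  rw [hbSdef, hXS.ι_map cYS (Functor.whiskerLeft (incl p) F) ⟨m, hpm⟩]; rfl
            have e3 : F.app m ≫ cYS.ι.app ⟨m, hpm⟩ = F.app m ≫ inlQY := by rw [hYm_leg] <;> rfl
            exact e1.trans (e2.trans e3)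
          have R1 : inlQX ≫ q1 ≫ h = F.app m ≫ inlQY := by
            rw [← Category.assoc, ← hr1, Category.assoc, hh1, ← Category.assoc, hk1]
          rw [L1, R1]
        · apply hX'.hom_ext
          intro s
          obtain ⟨s, hs⟩ := s
          have L2 : cX'.ι.app ⟨s, hs⟩ ≫ inrQX ≫ bS
              = F.app s ≫ cY'.ι.app ⟨s, hs⟩ ≫ inrQY := by
            have e1 : cX'.ι.app ⟨s, hs⟩ ≫ inrQX ≫ bS
                = (cX'.ι.app ⟨s, hs⟩ ≫ inrQX) ≫ bS := by rw [Category.assoc]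
            have e2 : (cX'.ι.app ⟨s, hs⟩ ≫ inrQX) ≫ bS = cXS.ι.app ⟨s, hs.1⟩ ≫ bS := by
                  rw [hX_leg s hs] <;> rfl
            have e3 : cXS.ι.app ⟨s, hs.1⟩ ≫ bS = F.app s ≫ cYS.ι.app ⟨s, hs.1⟩ := by
                  rw [hbSdef, hXS.ι_map cYS (Functor.whiskerLeft (incl p) F) ⟨s, hs.1⟩]; rfl
            have e4 : F.app s ≫ cYS.ι.app ⟨s, hs.1⟩ = F.app s ≫ cY'.ι.app ⟨s, hs⟩ ≫ inrQY := by
                  rw [hY_leg s hs] <;> rfl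
            exact e1.trans (e2.trans (e3.trans e4))
          have R2 : cX'.ι.app ⟨s, hs⟩ ≫ inrQX ≫ q1 ≫ h
              = F.app s ≫ cY'.ι.app ⟨s, hs⟩ ≫ inrQY := by
            have e1 : cX'.ι.app ⟨s, hs⟩ ≫ inrQX ≫ q1 ≫ h
                = cX'.ι.app ⟨s, hs⟩ ≫ (inrQX ≫ q1) ≫ h := by
                  simp only [Category.assoc]
            have e2 : cX'.ι.app ⟨s, hs⟩ ≫ (inrQX ≫ q1) ≫ h = cX'.ι.app ⟨s, hs⟩ ≫ (b' ≫ q2) ≫ h := by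
                  rw [← S4.w]
            have e3 : cX'.ι.app ⟨s, hs⟩ ≫ (b' ≫ q2) ≫ h = (cX'.ι.app ⟨s, hs⟩ ≫ b') ≫ q2 ≫ h := by
                  simp only [Category.assoc]
            have e4 : (cX'.ι.app ⟨s, hs⟩ ≫ b') ≫ q2 ≫ h = (cX'.ι.app ⟨s, hs⟩ ≫ b') ≫ inrQY := by
                  rw [hh2]
            have e5 : (cX'.ι.app ⟨s, hs⟩ ≫ b') ≫ inrQY = F.app s ≫ cY'.ι.app ⟨s, hs⟩ ≫ inrQY := by
                  rw [hb'def, hX'.ι_map cY' (Functor.whiskerLeft (incl p') F) ⟨s, hs⟩,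
                    Category.assoc]; rfl
            exact e1.trans (e2.trans (e3.trans (e4.trans e5)))
          exact L2.trans R2.symm
      rw [hfinal]
      exact hN_comp q1 h (hN_pushout b' inrQX q2 q1 S4 hb') (hN_pushout k r inlQY h S7 hkN)
    · exact good_empty N hN_iso F p (fun s hs => hne ⟨s, hs⟩)

end Stmt9


/-- Let `C` be a category with finite colimits and `N ⊆ C` a subcategory closed
under cobase change containing all isomorphisms.  If `F : X ⟶ Y` is a cospecial `N`-map of
diagrams indexed by a cofinite poset `I`, then `F` is a levelwise `N`-map. -/
theorem stmt_9 {C : Type u} [Category.{v} C] [HasFiniteColimits C]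
    (N : MorphismProperty C)
    (hN_iso : ∀ {X Y : C} (e : X ≅ Y), N e.hom)
    (hN_comp : ∀ {X Y Z : C} (f : X ⟶ Y) (g : Y ⟶ Z), N f → N g → N (f ≫ g))
    (hN_pushout : ∀ {A B X Y : C} (n : A ⟶ B) (u : A ⟶ X) (w : B ⟶ Y) (g : X ⟶ Y),
      IsPushout n u w g → N n → N g)
    {I : Type w} [PartialOrder I] (hI : CofinitePoset I)
    {X Y : I ⥤ C} (F : X ⟶ Y) (hF : IsCospecial N F) :
    ∀ t : I, N (F.app t) := by
  intro t
  obtain ⟨cXt, cYt, ⟨hXt⟩, ⟨hYt⟩, a, b, e, hcomp, P, inlP, inrP, k, hpushP, hk1, hk2, hkN⟩ :=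
    hF t
  have hfin : (setOf (fun s : I => s < t)).Finite := (hI t).subset (fun s hs => le_of_lt hs)
  obtain ⟨cX0, cY0, hX0, hY0, hb0⟩ :=
    Stmt9.good N hN_iso hN_comp hN_pushout F hF hfin.toFinset.card (fun s => s < t) hfin le_rfl
      (fun a b hab hb => lt_of_le_of_lt hab hb)
  -- transport the canonical map along the unique isomorphisms of colimits
  have hXt' : IsColimit (cXt : Cocone (Stmt9.incl (fun s : I => s < t) ⋙ X)) := hXt
  have hYt' : IsColimit (cYt : Cocone (Stmt9.incl (fun s : I => s < t) ⋙ Y)) := hYt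
  let isoX := hXt'.coconePointUniqueUpToIso hX0
  let isoY := hY0.coconePointUniqueUpToIso hYt'
  have hb : b = isoX.hom ≫ hX0.map cY0 (Functor.whiskerLeft (Stmt9.incl (fun s : I => s < t)) F) ≫ isoY.hom := by
    apply hXt'.hom_ext
    intro s
    rw [(hcomp s).2.1]
    erw [← Category.assoc, IsColimit.comp_coconePointUniqueUpToIso_hom hXt' hX0 s,
      ← Category.assoc, hX0.ι_map cY0 (Functor.whiskerLeft (Stmt9.incl (fun s : I => s < t)) F) s,
      Category.assoc, IsColimit.comp_coconePointUniqueUpToIso_hom hY0 hYt' s]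
    rfl
  have hNb : N b := by
    rw [hb]
    exact hN_comp _ _ (hN_iso isoX) (hN_comp _ _ hb0 (hN_iso isoY))
  have hNinl : N inlP := hN_pushout b a inrP inlP hpushP.flip hNb
  rw [← hk1]
  exact hN_comp _ _ hNinl hkN
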